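/- (Full-rankness of the eavesdropped repair encoder matrix.) Let F be a field, let 1 ≤ m ≤ d and 1 ≤ ℓ ≤ d be integers, and let ψ₁, …, ψ_ℓ be distinct nonzero elements of F. For f ∈ F, let Ξ^f be the matrix whose rows are indexed by the m-element subsets I of [d] and whose columns are indexed by the (m−1)-element subsets 𝒥 of [d], with entry Ξ^f(I,𝒥) = (−1)^{ind_I(x)} · f^x if 𝒥 ∪ {x} = I for some x ∈ I \ 𝒥, and Ξ^f(I,𝒥) = 0 otherwise, where ind_I(x) = |{y ∈ I : y ≤ x}|. Let ⌈Ξ⌉^ℒ be the matrix whose rows are indexed by the m-element subsets I of [d] with I ∩ [ℓ] ≠ ∅ and whose columns are indexed by pairs (j, 𝒥) with j ∈ [ℓ] and 𝒥 an (m−1)-subset of [d], with entry ⌈Ξ⌉^ℒ(I,(j,𝒥)) = Ξ^{ψ_j}(I,𝒥). Then ⌈Ξ⌉^ℒ has full row rank; i.e., its rank equals C(d,m) − C(d−ℓ,m). -/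

import Mathlib

section RepairEncoderAux
variable {F : Type*} [Field F]

lemma repair_card_aux (d m ℓ : ℕ) (hℓd : ℓ ≤ d) :
    (((Finset.Icc 1 d).powersetCard m).filter
      (fun I => (I ∩ Finset.Icc 1 ℓ).Nonempty)).card
      = Nat.choose d m - Nat.choose (d - ℓ) m := by
  classical
  have hsplit := Finset.card_filter_add_card_filter_not
    (s := (Finset.Icc 1 d).powersetCard m)
    (p := fun I => (I ∩ Finset.Icc 1 ℓ).Nonempty)
  have hneg : ((Finset.Icc 1 d).powersetCard m).filter
      (fun I => ¬ (I ∩ Finset.Icc 1 ℓ).Nonempty)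
      = (Finset.Icc (ℓ+1) d).powersetCard m := by
    ext A
    simp only [Finset.mem_filter, Finset.mem_powersetCard, Finset.not_nonempty_iff_eq_empty]
    constructor
    · rintro ⟨⟨hsub, hcard⟩, hempty⟩
      refine ⟨fun y hy => ?_, hcard⟩
      have h1 := hsub hy
      simp only [Finset.mem_Icc] at h1 ⊢
      have : y ∉ Finset.Icc 1 ℓ := by
        intro hc
        have : y ∈ A ∩ Finset.Icc 1 ℓ := Finset.mem_inter.mpr ⟨hy, hc⟩
        simp [hempty] at this
      simp only [Finset.mem_Icc] at this
      omega
    · rintro ⟨hsub, hcard⟩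
      refine ⟨⟨fun y hy => ?_, hcard⟩, ?_⟩
      · have := hsub hy; simp only [Finset.mem_Icc] at this ⊢; omega
      · rw [Finset.eq_empty_iff_forall_notMem]
        intro y hy
        rw [Finset.mem_inter] at hy
        have h1 := hsub hy.1
        have h2 := hy.2
        simp only [Finset.mem_Icc] at h1 h2
        omega
  rw [hneg] at hsplit
  rw [Finset.card_powersetCard, Finset.card_powersetCard, Nat.card_Icc, Nat.card_Icc] at hsplit
  have e1 : d + 1 - 1 = d := by omega
  have e2 : d + 1 - (ℓ + 1) = d - ℓ := by omega
  rw [e1, e2] at hsplit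
  have hle : Nat.choose (d - ℓ) m ≤ Nat.choose d m := Nat.choose_le_choose m (by omega)
  omega


set_option maxHeartbeats 1000000 in
/-- The core linear-independence statement. -/
lemma repair_aux (d m ℓ : ℕ)
    (hm : 1 ≤ m) (hmd : m ≤ d) (hℓ : 1 ≤ ℓ) (hℓd : ℓ ≤ d)
    (ψ : Fin ℓ → F) (hinj : Function.Injective ψ) (hψ : ∀ j, ψ j ≠ 0)
    (S : Finset (Finset ℕ))
    (hS : S = ((Finset.Icc 1 d).powersetCard m).filter
      (fun I => (I ∩ Finset.Icc 1 ℓ).Nonempty))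
    (g : {I // I ∈ S} → F)
    (hg : ∀ (c : Fin ℓ × {J // J ∈ (Finset.Icc 1 d).powersetCard (m - 1)}),
      ∑ I : {I // I ∈ S},
        (if c.2.1 ⊆ I.1 then
          ∑ x ∈ I.1 \ c.2.1,
            (-1 : F) ^ ((I.1.filter (· ≤ x)).card) * (ψ c.1) ^ x
        else 0) * g I = 0) :
    g = 0 := by
  classical
  set G : Finset ℕ → F := fun A => if h : A ∈ S then g ⟨A, h⟩ else 0 with hGdef
  -- rewrite hypothesis as a sum over all m-subsets
  have hgT : ∀ (c : Fin ℓ × {J // J ∈ (Finset.Icc 1 d).powersetCard (m - 1)}),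
      ∑ A ∈ (Finset.Icc 1 d).powersetCard m,
        (if c.2.1 ⊆ A then
          ∑ x ∈ A \ c.2.1,
            (-1 : F) ^ ((A.filter (· ≤ x)).card) * (ψ c.1) ^ x
        else 0) * G A = 0 := by
    intro c
    have h2 : ∑ A ∈ (Finset.Icc 1 d).powersetCard m,
        (if c.2.1 ⊆ A then
          ∑ x ∈ A \ c.2.1,
            (-1 : F) ^ ((A.filter (· ≤ x)).card) * (ψ c.1) ^ x
        else 0) * G A
        = ∑ A ∈ S,
        (if c.2.1 ⊆ A then
          ∑ x ∈ A \ c.2.1,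
            (-1 : F) ^ ((A.filter (· ≤ x)).card) * (ψ c.1) ^ x
        else 0) * G A := by
      symm
      apply Finset.sum_subset
      · rw [hS]; exact Finset.filter_subset _ _
      · intro A _ hAS
        have : G A = 0 := by simp only [hGdef]; rw [dif_neg hAS]
        rw [this, mul_zero]
    rw [h2, ← Finset.sum_coe_sort S]
    have h3 : ∀ I : {I // I ∈ S},
        (if c.2.1 ⊆ I.1 then
          ∑ x ∈ I.1 \ c.2.1,
            (-1 : F) ^ ((I.1.filter (· ≤ x)).card) * (ψ c.1) ^ x
        else 0) * G I.1
        = (if c.2.1 ⊆ I.1 then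
          ∑ x ∈ I.1 \ c.2.1,
            (-1 : F) ^ ((I.1.filter (· ≤ x)).card) * (ψ c.1) ^ x
        else 0) * g I := by
      intro I
      congr 1
      simp only [hGdef]
      rw [dif_pos I.2]
    calc ∑ I : {I // I ∈ S}, (if c.2.1 ⊆ I.1 then
          ∑ x ∈ I.1 \ c.2.1,
            (-1 : F) ^ ((I.1.filter (· ≤ x)).card) * (ψ c.1) ^ x
        else 0) * G I.1
        = ∑ I : {I // I ∈ S}, (if c.2.1 ⊆ I.1 then
          ∑ x ∈ I.1 \ c.2.1,
            (-1 : F) ^ ((I.1.filter (· ≤ x)).card) * (ψ c.1) ^ x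
        else 0) * g I := Finset.sum_congr rfl (fun I _ => h3 I)
      _ = 0 := hg c
  -- main claim by induction on the size of the intersection with [ℓ]
  have claim : ∀ k : ℕ, ∀ (A : Finset ℕ) (hA : A ∈ S),
      (A ∩ Finset.Icc 1 ℓ).card ≤ k → g ⟨A, hA⟩ = 0 := by
    intro k
    induction k with
    | zero =>
      intro A hA hcard
      have hA' := hA
      rw [hS] at hA'
      have hne : (A ∩ Finset.Icc 1 ℓ).Nonempty := (Finset.mem_filter.mp hA').2
      have := Finset.card_pos.mpr hne
      omega
    | succ k ih =>
      intro A hA hcard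
      rcases Nat.lt_or_ge (A ∩ Finset.Icc 1 ℓ).card (k+1) with hlt | hge
      · exact ih A hA (by omega)
      have hcard' : (A ∩ Finset.Icc 1 ℓ).card = k + 1 := by omega
      have hA' := hA
      rw [hS] at hA'
      obtain ⟨hAT, hne⟩ := Finset.mem_filter.mp hA'
      obtain ⟨hsub, hcardA⟩ := Finset.mem_powersetCard.mp hAT
      obtain ⟨x, hx⟩ := hne
      rw [Finset.mem_inter] at hx
      obtain ⟨hxA, hxl⟩ := hx
      set J : Finset ℕ := A.erase x with hJdef
      have hJsub : J ⊆ Finset.Icc 1 d := (Finset.erase_subset _ _).trans hsub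
      have hJcard : J.card = m - 1 := by
        rw [hJdef, Finset.card_erase_of_mem hxA, hcardA]
      have hJ : J ∈ (Finset.Icc 1 d).powersetCard (m - 1) :=
        Finset.mem_powersetCard.mpr ⟨hJsub, hJcard⟩
      have hxJ : x ∉ J := Finset.notMem_erase _ _
      -- the filtered row set is the image of inserting one element
      have himg : ((Finset.Icc 1 d).powersetCard m).filter (fun B => J ⊆ B)
          = ((Finset.Icc 1 d) \ J).image (fun y => insert y J) := by
        ext B
        simp only [Finset.mem_filter, Finset.mem_image, Finset.mem_sdiff,
          Finset.mem_powersetCard]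
        constructor
        · rintro ⟨⟨hBsub, hBcard⟩, hJB⟩
          have hsd : (B \ J).card = 1 := by
            rw [Finset.card_sdiff_of_subset hJB, hBcard, hJcard]; omega
          obtain ⟨y, hy⟩ := Finset.card_eq_one.mp hsd
          refine ⟨y, ⟨?_, ?_⟩, ?_⟩
          · have : y ∈ B \ J := by rw [hy]; exact Finset.mem_singleton_self y
            exact hBsub (Finset.mem_sdiff.mp this).1
          · have h5 : y ∈ B \ J := by rw [hy]; exact Finset.mem_singleton_self y
            exact (Finset.mem_sdiff.mp h5).2
          · have h4 := Finset.union_sdiff_of_subset hJB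
            rw [hy] at h4
            rw [← h4, Finset.union_comm, Finset.insert_eq]
        · rintro ⟨y, ⟨hyd, hyJ⟩, rfl⟩
          refine ⟨⟨?_, ?_⟩, Finset.subset_insert _ _⟩
          · exact Finset.insert_subset hyd hJsub
          · rw [Finset.card_insert_of_notMem hyJ, hJcard]; omega
      have hinjins : ∀ y ∈ (Finset.Icc 1 d) \ J, ∀ y' ∈ (Finset.Icc 1 d) \ J,
          insert y J = insert y' J → y = y' := by
        intro y hy y' hy' heq
        have hyJ := (Finset.mem_sdiff.mp hy).2
        have : y ∈ insert y' J := heq ▸ Finset.mem_insert_self y J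
        rcases Finset.mem_insert.mp this with h | h
        · exact h
        · exact absurd h hyJ
      -- the key per-j equation over Icc 1 d \ J
      set a : ℕ → F := fun y =>
        (-1 : F) ^ (((insert y J).filter (· ≤ y)).card) * G (insert y J) with hadef
      have key : ∀ j : Fin ℓ, ∑ y ∈ (Finset.Icc 1 d) \ J, a y * ψ j ^ y = 0 := by
        intro j
        have h0 := hgT (j, ⟨J, hJ⟩)
        simp only at h0
        calc ∑ y ∈ (Finset.Icc 1 d) \ J, a y * ψ j ^ y
            = ∑ y ∈ (Finset.Icc 1 d) \ J,
              (∑ z ∈ (insert y J) \ J,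
                (-1 : F) ^ (((insert y J).filter (· ≤ z)).card) * (ψ j) ^ z) * G (insert y J) := by
              apply Finset.sum_congr rfl
              intro y hy
              have hyJ := (Finset.mem_sdiff.mp hy).2
              rw [Finset.insert_sdiff_cancel (by simpa using hyJ)]
              rw [Finset.sum_singleton, hadef]
              ring
          _ = ∑ B ∈ ((Finset.Icc 1 d).powersetCard m).filter (fun B => J ⊆ B),
              (∑ z ∈ B \ J, (-1 : F) ^ ((B.filter (· ≤ z)).card) * (ψ j) ^ z) * G B := by
              rw [himg, Finset.sum_image hinjins]
          _ = ∑ B ∈ (Finset.Icc 1 d).powersetCard m,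
              (if J ⊆ B then
                ∑ z ∈ B \ J, (-1 : F) ^ ((B.filter (· ≤ z)).card) * (ψ j) ^ z
              else 0) * G B := by
              rw [Finset.sum_filter]
              apply Finset.sum_congr rfl
              intro B _
              split_ifs <;> simp
          _ = 0 := h0
      -- terms with y > ℓ vanish
      have hG0 : ∀ y, y ∉ J → ℓ < y → G (insert y J) = 0 := by
        intro y hyJ hly
        by_cases h : insert y J ∈ S
        · have hcomp : (insert y J ∩ Finset.Icc 1 ℓ) = J ∩ Finset.Icc 1 ℓ := by
            apply Finset.insert_inter_of_notMem
            simp only [Finset.mem_Icc]; omega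
          have hJk : (J ∩ Finset.Icc 1 ℓ).card = k := by
            rw [hJdef, Finset.erase_inter, Finset.card_erase_of_mem
              (Finset.mem_inter.mpr ⟨hxA, hxl⟩), hcard']
            omega
          have := ih (insert y J) h (by rw [hcomp, hJk])
          simp only [hGdef]
          rw [dif_pos h]
          exact this
        · simp only [hGdef]; rw [dif_neg h]
      have key2 : ∀ j : Fin ℓ, ∑ y ∈ (Finset.Icc 1 ℓ) \ J, a y * ψ j ^ y = 0 := by
        intro j
        rw [← key j]
        apply Finset.sum_subset
        · apply Finset.sdiff_subset_sdiff (fun z hz => ?_) le_rfl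
          simp only [Finset.mem_Icc] at hz ⊢
          omega
        · intro y hy hy'
          obtain ⟨hyd, hyJ⟩ := Finset.mem_sdiff.mp hy
          simp only [Finset.mem_Icc] at hyd
          have hly : ℓ < y := by
            by_contra hc
            exact hy' (Finset.mem_sdiff.mpr ⟨Finset.mem_Icc.mpr ⟨hyd.1, by omega⟩, hyJ⟩)
          rw [hadef]
          simp only
          rw [hG0 y hyJ hly, mul_zero, zero_mul]
      -- convert to a Vandermonde system over Fin ℓ
      set b : Fin ℓ → F := fun i => if ((i : ℕ) + 1) ∈ J then 0 else a ((i : ℕ) + 1) with hbdef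
      have hb : ∀ j : Fin ℓ, ∑ i : Fin ℓ, b i * ψ j ^ (i : ℕ) = 0 := by
        intro j
        have h1 : ∑ i : Fin ℓ, b i * ψ j ^ ((i : ℕ) + 1)
            = ∑ y ∈ (Finset.Icc 1 ℓ) \ J, a y * ψ j ^ y := by
          rw [Finset.sdiff_eq_filter, Finset.sum_filter]
          refine Finset.sum_nbij' (i := fun (i : Fin ℓ) => (i : ℕ) + 1)
            (j := fun (y : ℕ) => if h : y - 1 < ℓ then (⟨y - 1, h⟩ : Fin ℓ) else
              ⟨0, by omega⟩)
            (hi := fun i _ => by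
              simp only [Finset.mem_Icc]
              omega)
            (hj := fun y _ => Finset.mem_univ _)
            (left_neg := fun i _ => by
              have hi := i.isLt
              rw [dif_pos (by omega : (i : ℕ) + 1 - 1 < ℓ)]
              ext
              simp)
            (right_neg := fun y hy => by
              have := Finset.mem_Icc.mp hy
              rw [dif_pos (by omega : y - 1 < ℓ)]
              simp only
              omega)
            (h := fun i _ => ?_)
          simp only [hbdef]
          split_ifs with h
          · simp [h]
          · simp [h]
        have h2 := key2 j
        rw [← h1] at h2
        have h3 : ∑ i : Fin ℓ, b i * ψ j ^ ((i : ℕ) + 1)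
            = (∑ i : Fin ℓ, b i * ψ j ^ (i : ℕ)) * ψ j := by
          rw [Finset.sum_mul]
          apply Finset.sum_congr rfl
          intro i _
          rw [pow_succ]; ring
        rw [h3] at h2
        rcases mul_eq_zero.mp h2 with h | h
        · exact h
        · exact absurd h (hψ j)
      have hb0 : b = 0 :=
        Matrix.eq_zero_of_forall_index_sum_mul_pow_eq_zero hinj hb
      -- conclude
      simp only [Finset.mem_Icc] at hxl
      have hxi : x - 1 < ℓ := by omega
      have hbx := congrFun hb0 ⟨x - 1, hxi⟩
      simp only [hbdef, Pi.zero_apply] at hbx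
      have hx1 : x - 1 + 1 = x := by omega
      rw [hx1, if_neg hxJ, hadef] at hbx
      simp only at hbx
      rw [Finset.insert_erase hxA] at hbx
      have hGA : G A = g ⟨A, hA⟩ := by simp only [hGdef]; rw [dif_pos hA]
      rw [hGA] at hbx
      rcases mul_eq_zero.mp hbx with h | h
      · exact absurd h (pow_ne_zero _ (neg_ne_zero.mpr one_ne_zero))
      · exact h
  funext I
  exact claim ℓ I.1 I.2 (le_trans (Finset.card_le_card Finset.inter_subset_right)
    (by rw [Nat.card_Icc]; omega))

end RepairEncoderAux

/-- Full-rankness of the eavesdropped repair encoder matrix `⌈Ξ⌉^ℒ`: its rows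
are indexed by the `m`-subsets `I ⊆ [d]` with `I ∩ [ℓ] ≠ ∅`, its columns by
pairs `(j, 𝒥)` with `j ∈ [ℓ]` and `𝒥` an `(m−1)`-subset of `[d]`, its entry at
`(I, (j, 𝒥))` being `(−1)^{ind_I(x)}·ψⱼ^x` if `I = 𝒥 ∪ {x}` and `0` otherwise.
Its rank equals `C(d,m) − C(d−ℓ,m)`, the number of its rows. -/
theorem repair_encoder_full_rank (F : Type*) [Field F] (d m ℓ : ℕ)
    (hm : 1 ≤ m) (hmd : m ≤ d) (hℓ : 1 ≤ ℓ) (hℓd : ℓ ≤ d)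
    (ψ : Fin ℓ → F) (hinj : Function.Injective ψ) (hψ : ∀ j, ψ j ≠ 0) :
    (Matrix.of fun
        (I : {I // I ∈ ((Finset.Icc 1 d).powersetCard m).filter
              (fun I => (I ∩ Finset.Icc 1 ℓ).Nonempty)})
        (c : Fin ℓ × {J // J ∈ (Finset.Icc 1 d).powersetCard (m - 1)}) =>
        if c.2.1 ⊆ I.1 then
          ∑ x ∈ I.1 \ c.2.1,
            (-1 : F) ^ ((I.1.filter (· ≤ x)).card) * (ψ c.1) ^ x
        else 0).rank
      = Nat.choose d m - Nat.choose (d - ℓ) m := by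
  classical
  set M : Matrix {I // I ∈ ((Finset.Icc 1 d).powersetCard m).filter
              (fun I => (I ∩ Finset.Icc 1 ℓ).Nonempty)}
      (Fin ℓ × {J // J ∈ (Finset.Icc 1 d).powersetCard (m - 1)}) F :=
    Matrix.of fun I c =>
        if c.2.1 ⊆ I.1 then
          ∑ x ∈ I.1 \ c.2.1,
            (-1 : F) ^ ((I.1.filter (· ≤ x)).card) * (ψ c.1) ^ x
        else 0 with hMdef
  have hker : ∀ g, M.transpose.mulVec g = 0 → g = 0 := by
    intro g hg
    apply repair_aux d m ℓ hm hmd hℓ hℓd ψ hinj hψ _ rfl g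
    intro c
    have := congrFun hg c
    simp only [Matrix.mulVec, Matrix.transpose_apply, Pi.zero_apply, dotProduct,
      hMdef, Matrix.of_apply] at this
    exact this
  have hinj' : Function.Injective M.transpose.mulVecLin := by
    rw [← LinearMap.ker_eq_bot, LinearMap.ker_eq_bot']
    intro g hg
    exact hker g (by simpa only [Matrix.mulVecLin_apply] using hg)
  have hfr : Module.finrank F ({I // I ∈ ((Finset.Icc 1 d).powersetCard m).filter
              (fun I => (I ∩ Finset.Icc 1 ℓ).Nonempty)} → F)
      = Fintype.card ((((Finset.Icc 1 d).powersetCard m).filter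
              (fun I => (I ∩ Finset.Icc 1 ℓ).Nonempty)) : Finset (Finset ℕ)) :=
    Module.finrank_pi F
  have hrank : M.transpose.rank = (((Finset.Icc 1 d).powersetCard m).filter
              (fun I => (I ∩ Finset.Icc 1 ℓ).Nonempty)).card := by
    rw [Matrix.rank, LinearMap.finrank_range_of_inj hinj', hfr, Fintype.card_coe]
  rw [← Matrix.rank_transpose, hrank]
  exact repair_card_aux d m ℓ hℓd
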